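/- If d ≥ 1 and D_1 is a maximal independent set of the Andrásfai graph Γ_d, then Γ_d admits a proper 3-coloring with color classes {D_1, D_2, D_3} such that the subgraph of Γ_d induced on D_2 ∪ D_3 contains no induced matching of size 2 (equivalently, the complement of Γ_d restricted to D_2 ∪ D_3 has no induced 4-cycle). -/

import Mathlib

/-- The Andrásfai graph `Γ_d`: vertex set `ZMod (3*d-1)`, with `x` adjacent to `y`
iff `y - x ∈ {d, ..., 2*d-1}` (the condition is symmetrized). -/
def andrasfai (d : ℕ) : SimpleGraph (ZMod (3 * d - 1)) where
  Adj x y := x ≠ y ∧ ((d ≤ (y - x).val ∧ (y - x).val ≤ 2 * d - 1) ∨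
      (d ≤ (x - y).val ∧ (x - y).val ≤ 2 * d - 1))
  symm := ⟨fun x y h => ⟨h.1.symm, h.2.symm⟩⟩
  loopless := ⟨fun x h => h.1 rfl⟩
/-- `S` is an independent set of `G`. -/
def IndepSet {V : Type*} (G : SimpleGraph V) (S : Set V) : Prop :=
  S.Pairwise fun a b => ¬ G.Adj a b
/-- The subgraph of `G` induced on `S` has no induced matching with two edges:
there are no four distinct vertices `u, v, u', v'` in `S` with `uv` and `u'v'`
edges and no other edges among them. -/
def NoInducedTwoMatching {V : Type*} (G : SimpleGraph V) (S : Set V) : Prop :=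
  ¬ ∃ u v u' v', u ∈ S ∧ v ∈ S ∧ u' ∈ S ∧ v' ∈ S ∧
    u ≠ u' ∧ u ≠ v' ∧ v ≠ u' ∧ v ≠ v' ∧
    G.Adj u v ∧ G.Adj u' v' ∧
    ¬ G.Adj u u' ∧ ¬ G.Adj u v' ∧ ¬ G.Adj v u' ∧ ¬ G.Adj v v'

/-- Case analysis for the value of a difference in `ZMod n`. -/
lemma zval_sub_cases {n : ℕ} [NeZero n] (u w : ZMod n) :
    (w.val ≤ u.val ∧ (u - w).val = u.val - w.val) ∨
      (u.val < w.val ∧ (u - w).val = n - (w.val - u.val)) := by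
  rcases le_or_gt w.val u.val with h | h
  · exact Or.inl ⟨h, ZMod.val_sub h⟩
  · right
    refine ⟨h, ?_⟩
    have h1 : (w - u).val = w.val - u.val := ZMod.val_sub h.le
    have h2 : u - w = -(w - u) := by ring
    have h3 : w - u ≠ 0 := by
      intro h0
      rw [sub_eq_zero] at h0
      rw [h0] at h
      exact lt_irrefl _ h
    rw [h2, ZMod.neg_val, if_neg h3, h1]

/-- Simplified adjacency criterion for the Andrásfai graph. -/
lemma andrasfai_adj_iff (d : ℕ) (hd : 1 ≤ d) (x y : ZMod (3 * d - 1)) :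
    (andrasfai d).Adj x y ↔ d ≤ (y - x).val ∧ (y - x).val ≤ 2 * d - 1 := by
  haveI : NeZero (3 * d - 1) := ⟨by omega⟩
  have hlt : (y - x).val < 3 * d - 1 := ZMod.val_lt _
  have hA : (andrasfai d).Adj x y ↔ (x ≠ y ∧ ((d ≤ (y - x).val ∧ (y - x).val ≤ 2 * d - 1) ∨
      (d ≤ (x - y).val ∧ (x - y).val ≤ 2 * d - 1))) := Iff.rfl
  by_cases hxy : x = y
  · subst hxy
    simp only [sub_self, ZMod.val_zero, hA, ne_eq, not_true_eq_false, false_and, false_iff]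
    omega
  · have h0 : y - x ≠ 0 := by
      intro h; rw [sub_eq_zero] at h; exact hxy h.symm
    have h0' : (y - x).val ≠ 0 := by
      intro h; exact h0 ((ZMod.val_eq_zero _).mp h)
    have hneg : (x - y).val = (3 * d - 1) - (y - x).val := by
      have : x - y = -(y - x) := by ring
      rw [this, ZMod.neg_val, if_neg h0]
    rw [hA]
    constructor
    · rintro ⟨-, h | h⟩
      · exact h
      · constructor <;> omega
    · intro h
      exact ⟨hxy, Or.inl h⟩

/-- If `D_1` is a maximal independent set of the Andrásfai graph `Γ_d`, then `Γ_d`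
admits a proper 3-coloring `{D_1, D_2, D_3}` such that the subgraph induced on
`D_2 ∪ D_3` has no induced matching of size two. -/
theorem andrasfai_coloring_of_maximal_indep (d : ℕ) (hd : 1 ≤ d)
    (D1 : Set (ZMod (3 * d - 1))) (hD1 : IndepSet (andrasfai d) D1)
    (hmax : ∀ T : Set (ZMod (3 * d - 1)), IndepSet (andrasfai d) T → D1 ⊆ T → T = D1) :
    ∃ D2 D3 : Set (ZMod (3 * d - 1)),
      IndepSet (andrasfai d) D2 ∧ IndepSet (andrasfai d) D3 ∧
      Disjoint D1 D2 ∧ Disjoint D1 D3 ∧ Disjoint D2 D3 ∧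
      D1 ∪ D2 ∪ D3 = Set.univ ∧
      NoInducedTwoMatching (andrasfai d) (D2 ∪ D3) := by
  haveI : NeZero (3 * d - 1) := ⟨by omega⟩
  -- D1 is nonempty
  have hne : D1.Nonempty := by
    by_contra h
    rw [Set.not_nonempty_iff_eq_empty] at h
    have h1 : IndepSet (andrasfai d) {0} := by
      intro a ha b hb hab
      simp only [Set.mem_singleton_iff] at ha hb
      subst ha; subst hb; exact absurd rfl hab
    have := hmax {0} h1 (by rw [h]; exact Set.empty_subset _)
    rw [h] at this
    exact absurd this (by simp [Set.eq_empty_iff_forall_notMem])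
  obtain ⟨s0, hs0⟩ := hne
  -- the shifted position function
  set c : ZMod (3 * d - 1) := ((d - 1 : ℕ) : ZMod (3 * d - 1)) with hc
  set q : ZMod (3 * d - 1) → ℕ := fun x => (x - s0 + c).val with hq
  -- bound on q on D1
  have hqbound : ∀ s ∈ D1, q s ≤ 2 * d - 2 := by
    intro s hs
    have hv : (s - s0).val < d ∨ 2 * d ≤ (s - s0).val := by
      by_cases h : s = s0
      · subst h; left; rw [sub_self, ZMod.val_zero]; omega
      · have hna : ¬ (andrasfai d).Adj s0 s := hD1 hs0 hs (fun h' => h h'.symm)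
        rw [andrasfai_adj_iff d hd] at hna
        have := ZMod.val_lt (s - s0)
        omega
    have hval : q s = ((s - s0).val + (d - 1)) % (3 * d - 1) := by
      show (s - s0 + c).val = _
      rw [ZMod.val_add, hc, ZMod.val_natCast]
      have hm : (d - 1) % (3 * d - 1) = d - 1 := Nat.mod_eq_of_lt (by omega)
      rw [hm]
    have hlt := ZMod.val_lt (s - s0)
    rcases hv with h | h
    · rw [hval, Nat.mod_eq_of_lt (by omega)]; omega
    · rw [hval, Nat.mod_eq_sub_mod (by omega), Nat.mod_eq_of_lt (by omega)]; omega
  -- pick the minimum of q on D1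
  obtain ⟨sm, hsm, hmin⟩ := Set.exists_min_image D1 q (Set.toFinite _) ⟨s0, hs0⟩
  -- difference values in terms of q
  have hdiff : ∀ x y : ZMod (3 * d - 1), y - x = (y - s0 + c) - (x - s0 + c) := by
    intro x y; ring
  -- D1 is contained in the interval of length d starting at sm
  have hsub : D1 ⊆ {x | (x - sm).val < d} := by
    intro s hs
    simp only [Set.mem_setOf_eq]
    by_cases hssm : s = sm
    · subst hssm; rw [sub_self, ZMod.val_zero]; omega
    · have heq : s - sm = (s - s0 + c) - (sm - s0 + c) := hdiff sm s
      rcases zval_sub_cases (s - s0 + c) (sm - s0 + c) with ⟨h0, h⟩ | ⟨h1, h2⟩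
      · -- val = q s - q sm
        have hna : ¬ (andrasfai d).Adj sm s := hD1 hsm hs (fun h' => hssm h'.symm)
        rw [andrasfai_adj_iff d hd] at hna
        rw [heq] at *
        have hb1 := hqbound s hs
        have hb2 := hmin s hs
        simp only [hq] at h hb1 hb2 ⊢
        omega
      · exact absurd (hmin s hs) (by simp only [hq]; omega)
  -- the interval is independent
  have hint : ∀ (lo len : ℕ), len ≤ d →
      IndepSet (andrasfai d) {x | lo ≤ (x - sm).val ∧ (x - sm).val < lo + len} := by
    intro lo len hlen x hx y hy hxy
    simp only [Set.mem_setOf_eq] at hx hy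
    rw [andrasfai_adj_iff d hd]
    have heq : y - x = (y - sm) - (x - sm) := by ring
    rw [heq]
    have hvx := ZMod.val_lt (x - sm)
    have hvy := ZMod.val_lt (y - sm)
    rcases zval_sub_cases (y - sm) (x - sm) with ⟨h0, h⟩ | ⟨h1, h2⟩ <;> omega
  -- D1 equals the interval
  have hD1eq : D1 = {x | (x - sm).val < d} := by
    have hset : {x : ZMod (3 * d - 1) | (x - sm).val < d} =
        {x | 0 ≤ (x - sm).val ∧ (x - sm).val < 0 + d} := by
      ext x; simp only [Set.mem_setOf_eq]; omega
    exact (hmax _ (hset ▸ hint 0 d le_rfl) hsub).symm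
  refine ⟨{x | d ≤ (x - sm).val ∧ (x - sm).val < 2 * d},
    {x | 2 * d ≤ (x - sm).val}, ?_, ?_, ?_, ?_, ?_, ?_, ?_⟩
  · have hset : {x : ZMod (3 * d - 1) | d ≤ (x - sm).val ∧ (x - sm).val < 2 * d} =
        {x | d ≤ (x - sm).val ∧ (x - sm).val < d + d} := by
      ext x; simp only [Set.mem_setOf_eq]; omega
    exact hset ▸ hint d d le_rfl
  · intro x hx y hy hxy
    refine hint (2 * d) d le_rfl ?_ ?_ hxy
    · simp only [Set.mem_setOf_eq] at hx ⊢
      exact ⟨hx, by have := ZMod.val_lt (x - sm); omega⟩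
    · simp only [Set.mem_setOf_eq] at hy ⊢
      exact ⟨hy, by have := ZMod.val_lt (y - sm); omega⟩
  · rw [hD1eq, Set.disjoint_left]
    intro x hx hx2
    simp only [Set.mem_setOf_eq] at hx hx2
    omega
  · rw [hD1eq, Set.disjoint_left]
    intro x hx hx2
    simp only [Set.mem_setOf_eq] at hx hx2
    omega
  · rw [Set.disjoint_left]
    intro x hx hx2
    simp only [Set.mem_setOf_eq] at hx hx2
    omega
  · rw [hD1eq]
    ext x
    simp only [Set.mem_union, Set.mem_setOf_eq, Set.mem_univ, iff_true]
    have := ZMod.val_lt (x - sm)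
    omega
  · -- no induced two-matching on D2 ∪ D3
    rintro ⟨u, v, u', v', hu, hv, hu', hv', -, -, -, -, ha1, ha2, hn1, hn2, hn3, hn4⟩
    have hmem : ∀ x : ZMod (3 * d - 1),
        x ∈ ({x | d ≤ (x - sm).val ∧ (x - sm).val < 2 * d} ∪
          {x | 2 * d ≤ (x - sm).val} : Set (ZMod (3 * d - 1))) → d ≤ (x - sm).val := by
      intro x hx
      rcases hx with hx | hx <;> simp only [Set.mem_setOf_eq] at hx <;> omega
    have pu := hmem u hu
    have pv := hmem v hv
    have pu' := hmem u' hu'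
    have pv' := hmem v' hv'
    have key : ∀ x y : ZMod (3 * d - 1), d ≤ (x - sm).val → d ≤ (y - sm).val →
        ((andrasfai d).Adj x y ↔
          (d + (x - sm).val ≤ (y - sm).val ∨ d + (y - sm).val ≤ (x - sm).val)) := by
      intro x y hx hy
      rw [andrasfai_adj_iff d hd]
      have heq : y - x = (y - sm) - (x - sm) := by ring
      rw [heq]
      have h1 := ZMod.val_lt (x - sm)
      have h2 := ZMod.val_lt (y - sm)
      rcases zval_sub_cases (y - sm) (x - sm) with ⟨h0, h⟩ | ⟨h3, h4⟩ <;> omega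
    rw [key u v pu pv] at ha1
    rw [key u' v' pu' pv'] at ha2
    rw [key u u' pu pu'] at hn1
    rw [key u v' pu pv'] at hn2
    rw [key v u' pv pu'] at hn3
    rw [key v v' pv pv'] at hn4
    have h1 := ZMod.val_lt (u - sm)
    have h2 := ZMod.val_lt (v - sm)
    have h3 := ZMod.val_lt (u' - sm)
    have h4 := ZMod.val_lt (v' - sm)
    omega
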